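/- Let m ≥ 3 be odd and let d be an integer with gcd(d, 2^m - 1) = 1 such that the power function x ↦ x^d on F = GF(2^m) is maximum nonlinear. Assume that for all α, β ∈ F \ {0} with α ≠ β and all i, j ∈ GF(2) the cardinality |H^{i,j}(α,β) ∩ D_d| belongs to {2^(m-3), 2^(m-3) - 2^((m-3)/2), 2^(m-3) + 2^((m-3)/2)}. Then for every α ∈ F: Σ_{x ∈ F} (-1)^(tr(αx + x^d)) ≠ 0 if and only if tr(α) = 1. -/

import Mathlib

attribute [local instance] Classical.propDecidable

noncomputable instance (m : ℕ) : Fintype (GaloisField 2 m) := Fintype.ofFinite _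

/-- The absolute trace map from `GF(2^m)` to `GF(2)`. -/
noncomputable def tr (m : ℕ) (x : GaloisField 2 m) : ZMod 2 :=
  Algebra.trace (ZMod 2) (GaloisField 2 m) x

/-- `(-1)^t` as an integer, for `t ∈ GF(2)`. -/
def chi (t : ZMod 2) : ℤ := (-1) ^ t.val

/-- The Walsh coefficient `∑_{x ∈ F} (-1)^(tr(γx + βx^d))` of the power map `x ↦ x^d`. -/
noncomputable def walsh (m d : ℕ) (β γ : GaloisField 2 m) : ℤ :=
  ∑ x : GaloisField 2 m, chi (tr m (γ * x + β * x ^ d))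

/-- The power function `x ↦ x^d` on `GF(2^m)` is maximum nonlinear (almost bent). -/
def MaxNonlinear (m d : ℕ) : Prop :=
  ∀ β : GaloisField 2 m, β ≠ 0 → ∀ γ : GaloisField 2 m,
    walsh m d β γ ∈ ({0, 2 ^ ((m + 1) / 2), -(2 ^ ((m + 1) / 2))} : Set ℤ)

/-- `D_d = {x ∈ F : tr(x^d) = 1}`. -/
noncomputable def Dd (m d : ℕ) : Finset (GaloisField 2 m) :=
  Finset.univ.filter (fun x => tr m (x ^ d) = 1)

/-- `H^i(α) = {x ∈ F : tr(αx) = i}`. -/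
noncomputable def Hi (m : ℕ) (α : GaloisField 2 m) (i : ZMod 2) :
    Finset (GaloisField 2 m) :=
  Finset.univ.filter (fun x => tr m (α * x) = i)

/-- `H^{i,j}(α,β) = {x ∈ F : tr(αx) = i and tr(βx) = j}`. -/
noncomputable def Hij (m : ℕ) (α β : GaloisField 2 m) (i j : ZMod 2) :
    Finset (GaloisField 2 m) :=
  Finset.univ.filter (fun x => tr m (α * x) = i ∧ tr m (β * x) = j)


section aux

variable {m d : ℕ}

lemma zmod2_cases : ∀ t : ZMod 2, t = 0 ∨ t = 1 := by decide

lemma chi_add : ∀ s t : ZMod 2, chi (s + t) = chi s * chi t := by decide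

lemma chi_zero : chi 0 = 1 := by decide

lemma chi_one : chi 1 = -1 := by decide

lemma card_univ_F (hm : m ≠ 0) : (Finset.univ : Finset (GaloisField 2 m)).card = 2 ^ m := by
  rw [Finset.card_univ, ← Nat.card_eq_fintype_card, GaloisField.card 2 m hm]

lemma tr_add (x y : GaloisField 2 m) : tr m (x + y) = tr m x + tr m y := by
  simp [tr, map_add]

lemma tr_sq (x : GaloisField 2 m) : tr m (x ^ 2) = tr m x := by
  have hinj := (algebraMap (ZMod 2) (GaloisField 2 m)).injective
  apply hinj
  rw [tr]
  have h1 := trace_eq_sum_automorphisms (K := ZMod 2) (x := x)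
  have h2 := trace_eq_sum_automorphisms (K := ZMod 2) (x := x ^ 2)
  have hsq : ∀ z : ZMod 2, z ^ 2 = z := by decide
  calc algebraMap (ZMod 2) (GaloisField 2 m) (Algebra.trace (ZMod 2) (GaloisField 2 m) (x ^ 2))
      = ∑ σ : (GaloisField 2 m) ≃ₐ[ZMod 2] (GaloisField 2 m), σ (x ^ 2) := h2
    _ = (∑ σ : (GaloisField 2 m) ≃ₐ[ZMod 2] (GaloisField 2 m), σ x) ^ 2 := by
        rw [sum_pow_char]
        simp [map_pow]
    _ = (algebraMap (ZMod 2) (GaloisField 2 m) (Algebra.trace (ZMod 2) (GaloisField 2 m) x)) ^ 2 := by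
        rw [h1]
    _ = algebraMap (ZMod 2) (GaloisField 2 m) (Algebra.trace (ZMod 2) (GaloisField 2 m) x) := by
        rw [← map_pow, hsq]

lemma tr_one (hmodd : Odd m) : tr m (1 : GaloisField 2 m) = 1 := by
  obtain ⟨k, hk⟩ := hmodd
  have hm : m ≠ 0 := by omega
  have h1 : (1 : GaloisField 2 m) = algebraMap (ZMod 2) (GaloisField 2 m) 1 := by simp
  rw [tr, h1, Algebra.trace_algebraMap, GaloisField.finrank 2 hm, hk]
  have h2 : (2 : ZMod 2) = 0 := by decide
  rw [nsmul_eq_mul, mul_one]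
  push_cast
  rw [h2]
  ring


lemma card_split (X : Finset (GaloisField 2 m)) (g : GaloisField 2 m → ZMod 2) :
    X.card = (X.filter fun x => g x = 0).card + (X.filter fun x => g x = 1).card := by
  classical
  rw [← Finset.card_filter_add_card_filter_not (p := fun x => g x = 0)]
  congr 1
  apply congrArg
  apply Finset.filter_congr
  intro x _
  rcases zmod2_cases (g x) with h | h <;> simp [h]

lemma sum_chi_split (X : Finset (GaloisField 2 m)) (g : GaloisField 2 m → ZMod 2) :
    ∑ x ∈ X, chi (g x) =
      ((X.filter fun x => g x = 0).card : ℤ) - ((X.filter fun x => g x = 1).card : ℤ) := by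
  classical
  rw [← Finset.sum_filter_add_sum_filter_not X (fun x => g x = 0)]
  have h0 : ∑ x ∈ X.filter (fun x => g x = 0), chi (g x)
      = ((X.filter fun x => g x = 0).card : ℤ) := by
    rw [Finset.sum_congr rfl (fun x hx => ?_), Finset.sum_const, nsmul_eq_mul, mul_one]
    rw [(Finset.mem_filter.mp hx).2, chi_zero]
  have h1 : (X.filter fun x => ¬ g x = 0) = (X.filter fun x => g x = 1) := by
    apply Finset.filter_congr
    intro x _
    rcases zmod2_cases (g x) with h | h <;> simp [h]
  have h2 : ∑ x ∈ X.filter (fun x => ¬ g x = 0), chi (g x)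
      = -((X.filter fun x => g x = 1).card : ℤ) := by
    rw [h1, Finset.sum_congr rfl (fun x hx => ?_), Finset.sum_const, nsmul_eq_mul, mul_neg_one]
    rw [(Finset.mem_filter.mp hx).2, chi_one]
  rw [h0, h2]
  ring

lemma sum_chi_tr (hmodd : Odd m) : ∑ x : GaloisField 2 m, chi (tr m x) = 0 := by
  have key : ∑ x : GaloisField 2 m, chi (tr m x)
      = ∑ x : GaloisField 2 m, chi (tr m (1 + x)) :=
    (Fintype.sum_equiv (Equiv.addLeft (1 : GaloisField 2 m)) _ _ (fun x => rfl)).symm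
  have h2 : ∀ x : GaloisField 2 m, chi (tr m (1 + x)) = - chi (tr m x) := by
    intro x
    rw [tr_add, tr_one hmodd, chi_add, chi_one]
    ring
  simp only [h2, Finset.sum_neg_distrib] at key
  omega

lemma sum_chi_tr_mul (hmodd : Odd m) {γ : GaloisField 2 m} (hγ : γ ≠ 0) :
    ∑ x : GaloisField 2 m, chi (tr m (γ * x)) = 0 := by
  rw [← sum_chi_tr hmodd]
  exact Fintype.sum_equiv (Equiv.mulLeft₀ γ hγ) _ _ (fun x => rfl)

lemma pow_d_bijective (hm3 : 3 ≤ m) (hgcd : Nat.gcd d (2 ^ m - 1) = 1) :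
    Function.Bijective (fun x : GaloisField 2 m => x ^ d) := by
  have hd : d ≠ 0 := by
    rintro rfl
    rw [Nat.gcd_zero_left] at hgcd
    have : 8 ≤ 2 ^ m := by calc (8:ℕ) = 2 ^ 3 := rfl
                                _ ≤ 2 ^ m := Nat.pow_le_pow_right (by norm_num) hm3
    omega
  rw [Fintype.bijective_iff_injective_and_card]
  refine ⟨?_, rfl⟩
  intro x y hxy
  simp only at hxy
  rcases eq_or_ne y 0 with rfl | hy
  · rw [zero_pow hd] at hxy
    exact pow_eq_zero_iff hd |>.mp hxy
  rcases eq_or_ne x 0 with rfl | hx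
  · rw [zero_pow hd] at hxy
    exact ((pow_eq_zero_iff hd).mp hxy.symm).symm
  have hcard : Fintype.card (GaloisField 2 m) = 2 ^ m := by
    rw [← Nat.card_eq_fintype_card, GaloisField.card 2 m (by omega)]
  have hu : (x * y⁻¹) ^ d = 1 := by
    rw [mul_pow, hxy, inv_pow, mul_inv_cancel₀ (pow_ne_zero d hy)]
  have hord1 : orderOf (x * y⁻¹) ∣ d := orderOf_dvd_of_pow_eq_one hu
  have hne : x * y⁻¹ ≠ 0 := mul_ne_zero hx (inv_ne_zero hy)
  have hord2 : orderOf (x * y⁻¹) ∣ 2 ^ m - 1 := by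
    apply orderOf_dvd_of_pow_eq_one
    rw [← hcard]
    exact FiniteField.pow_card_sub_one_eq_one _ hne
  have : orderOf (x * y⁻¹) ∣ 1 := hgcd ▸ Nat.dvd_gcd hord1 hord2
  have h1 : x * y⁻¹ = 1 := orderOf_eq_one_iff.mp (Nat.dvd_one.mp this)
  exact (mul_inv_eq_one₀ hy).mp h1

end aux

section aux3
variable {m d : ℕ}

/-- The Walsh coefficient with `β = 1`. -/
noncomputable def Wf (m d : ℕ) (γ : GaloisField 2 m) : ℤ :=
  ∑ x : GaloisField 2 m, chi (tr m (γ * x + x ^ d))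

lemma Dd_card (hm3 : 3 ≤ m) (hmodd : Odd m) (hgcd : Nat.gcd d (2 ^ m - 1) = 1) :
    2 * ((Dd m d).card : ℤ) = 2 ^ m := by
  have hbij := pow_d_bijective hm3 hgcd
  have h1 : ∑ x : GaloisField 2 m, chi (tr m (x ^ d)) = 0 := by
    rw [Fintype.sum_bijective _ hbij _ (fun y => chi (tr m y)) (fun x => rfl)]
    exact sum_chi_tr hmodd
  have h2 := sum_chi_split Finset.univ (fun x : GaloisField 2 m => tr m (x ^ d))
  have h3 := card_split Finset.univ (fun x : GaloisField 2 m => tr m (x ^ d))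
  rw [card_univ_F (by omega : m ≠ 0)] at h3
  have hD : Dd m d = Finset.univ.filter (fun x : GaloisField 2 m => tr m (x ^ d) = 1) := rfl
  rw [h1] at h2
  rw [hD]
  have h4 : ((2:ℕ) ^ m : ℤ) = 2 ^ m := by push_cast; ring
  omega

lemma Wf_zero (hm3 : 3 ≤ m) (hmodd : Odd m) (hgcd : Nat.gcd d (2 ^ m - 1) = 1) :
    Wf m d 0 = 0 := by
  have hbij := pow_d_bijective hm3 hgcd
  have h0 : Wf m d 0 = ∑ x : GaloisField 2 m, chi (tr m (x ^ d)) := by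
    unfold Wf; congr 1; funext x; rw [zero_mul, zero_add]
  rw [h0, Fintype.sum_bijective _ hbij _ (fun y => chi (tr m y)) (fun x => rfl)]
  exact sum_chi_tr hmodd

lemma Wf_eq (hm3 : 3 ≤ m) (hmodd : Odd m) (hgcd : Nat.gcd d (2 ^ m - 1) = 1)
    {γ : GaloisField 2 m} (hγ : γ ≠ 0) :
    Wf m d γ = 2 ^ m - 4 * (((Dd m d).filter fun x => tr m (γ * x) = 0).card : ℤ) := by
  have h1 : Wf m d γ = ∑ x : GaloisField 2 m, chi (tr m (γ * x)) * chi (tr m (x ^ d)) := by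
    unfold Wf; congr 1; funext x; rw [tr_add, chi_add]
  have h2 := Finset.sum_filter_add_sum_filter_not Finset.univ
      (fun x : GaloisField 2 m => tr m (x ^ d) = 1)
      (fun x => chi (tr m (γ * x)) * chi (tr m (x ^ d)))
  have hD : Finset.univ.filter (fun x : GaloisField 2 m => tr m (x ^ d) = 1) = Dd m d := rfl
  have h3 : ∑ x ∈ Dd m d, chi (tr m (γ * x)) * chi (tr m (x ^ d))
      = - ∑ x ∈ Dd m d, chi (tr m (γ * x)) := by
    rw [← Finset.sum_neg_distrib]
    apply Finset.sum_congr rfl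
    intro x hx
    have : tr m (x ^ d) = 1 := (Finset.mem_filter.mp hx).2
    rw [this, chi_one]; ring
  have h4 : ∑ x ∈ Finset.univ.filter (fun x : GaloisField 2 m => ¬ tr m (x ^ d) = 1),
        chi (tr m (γ * x)) * chi (tr m (x ^ d))
      = ∑ x ∈ Finset.univ.filter (fun x : GaloisField 2 m => ¬ tr m (x ^ d) = 1),
        chi (tr m (γ * x)) := by
    apply Finset.sum_congr rfl
    intro x hx
    have h5 : tr m (x ^ d) = 0 := by
      rcases zmod2_cases (tr m (x ^ d)) with h | h
      · exact h
      · exact absurd h (Finset.mem_filter.mp hx).2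
    rw [h5, chi_zero]; ring
  have h6 := Finset.sum_filter_add_sum_filter_not Finset.univ
      (fun x : GaloisField 2 m => tr m (x ^ d) = 1)
      (fun x => chi (tr m (γ * x)))
  have h7 : ∑ x : GaloisField 2 m, chi (tr m (γ * x)) = 0 := sum_chi_tr_mul hmodd hγ
  -- so: Wf γ = -S + (0 - S) = -2S  where S = ∑_{x∈Dd} chi(tr(γx))
  have h8 : Wf m d γ = - 2 * ∑ x ∈ Dd m d, chi (tr m (γ * x)) := by
    rw [h1, ← h2, hD, h3, h4]
    rw [hD] at h6
    rw [h7] at h6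
    linarith [h6]
  have h9 := sum_chi_split (Dd m d) (fun x => tr m (γ * x))
  have h10 := card_split (Dd m d) (fun x => tr m (γ * x))
  have h11 := Dd_card (d := d) hm3 hmodd hgcd
  rw [h8, h9]
  have h4' : ((2:ℕ) ^ m : ℤ) = 2 ^ m := by push_cast; ring
  omega

lemma Wf_frob (γ : GaloisField 2 m) : Wf m d (γ ^ 2) = Wf m d γ := by
  have hsqbij : Function.Bijective (fun y : GaloisField 2 m => y ^ 2) := by
    rw [Fintype.bijective_iff_injective_and_card]
    refine ⟨?_, rfl⟩
    intro a b hab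
    have := frobenius_inj (GaloisField 2 m) 2
    apply this
    simpa [frobenius_def] using hab
  unfold Wf
  rw [← Fintype.sum_bijective _ hsqbij
      (fun y => chi (tr m (γ ^ 2 * y ^ 2 + (y ^ 2) ^ d)))
      (fun x => chi (tr m (γ ^ 2 * x + x ^ d))) (fun y => rfl)]
  apply Finset.sum_congr rfl
  intro y _
  have key : γ ^ 2 * y ^ 2 + (y ^ 2) ^ d = (γ * y + y ^ d) ^ 2 := by
    rw [CharTwo.add_sq, mul_pow, ← pow_mul, mul_comm 2 d, pow_mul]
  rw [key, tr_sq]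

lemma d_ne_zero (hm3 : 3 ≤ m) (hgcd : Nat.gcd d (2 ^ m - 1) = 1) : d ≠ 0 := by
  rintro rfl
  rw [Nat.gcd_zero_left] at hgcd
  have : (8:ℕ) ≤ 2 ^ m := by
    calc (8:ℕ) = 2 ^ 3 := rfl
      _ ≤ 2 ^ m := Nat.pow_le_pow_right (by norm_num) hm3
  omega

lemma Wf_sum (hm3 : 3 ≤ m) (hmodd : Odd m) (hgcd : Nat.gcd d (2 ^ m - 1) = 1) :
    ∑ γ : GaloisField 2 m, Wf m d γ = 2 ^ m := by
  unfold Wf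
  rw [Finset.sum_comm]
  have hstep : ∀ x : GaloisField 2 m, x ≠ 0 →
      ∑ γ : GaloisField 2 m, chi (tr m (γ * x + x ^ d)) = 0 := by
    intro x hx
    have h1 : ∀ γ : GaloisField 2 m, chi (tr m (γ * x + x ^ d))
        = chi (tr m (x * γ)) * chi (tr m (x ^ d)) := by
      intro γ
      rw [tr_add, chi_add, mul_comm γ x]
    simp only [h1]
    rw [← Finset.sum_mul, sum_chi_tr_mul hmodd hx, zero_mul]
  rw [Finset.sum_eq_single_of_mem (0 : GaloisField 2 m) (Finset.mem_univ _)
      (fun x _ hx => hstep x hx)]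
  have h0 : (0:GaloisField 2 m) ^ d = 0 := zero_pow (d_ne_zero hm3 hgcd)
  have htr0 : tr m ((0:GaloisField 2 m)) = 0 :=
    map_zero (Algebra.trace (ZMod 2) (GaloisField 2 m))
  simp only [mul_zero, zero_add, h0, htr0, chi_zero]
  rw [Finset.sum_const, card_univ_F (by omega : m ≠ 0), nsmul_eq_mul, mul_one]
  push_cast; ring

end aux3

section aux4
variable {m d : ℕ}

lemma Hij_inter (α β : GaloisField 2 m) (i j : ZMod 2) :
    Hij m α β i j ∩ Dd m d
      = (Dd m d).filter (fun x => tr m (α * x) = i ∧ tr m (β * x) = j) := by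
  ext x
  simp only [Hij, Dd, Finset.mem_inter, Finset.mem_filter, Finset.mem_univ, true_and]
  tauto

lemma card_split_and (X : Finset (GaloisField 2 m)) (p : GaloisField 2 m → Prop)
    (g : GaloisField 2 m → ZMod 2) :
    (X.filter p).card = (X.filter fun x => p x ∧ g x = 0).card
      + (X.filter fun x => p x ∧ g x = 1).card := by
  rw [card_split (X.filter p) g, Finset.filter_filter, Finset.filter_filter]

lemma sq_bij : Function.Bijective (fun y : GaloisField 2 m => y ^ 2) := by
  rw [Fintype.bijective_iff_injective_and_card]
  refine ⟨?_, rfl⟩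
  intro a b hab
  have := frobenius_inj (GaloisField 2 m) 2
  apply this
  simpa [frobenius_def] using hab

lemma card_filter_split (X : Finset (GaloisField 2 m)) (p q r : GaloisField 2 m → Prop)
    [DecidablePred p] [DecidablePred q] [DecidablePred r]
    (h : ∀ x, p x ↔ (q x ∨ r x)) (hd : ∀ x, ¬(q x ∧ r x)) :
    (X.filter p).card = (X.filter q).card + (X.filter r).card := by
  have hu : X.filter p = X.filter q ∪ X.filter r := by
    ext x
    simp only [Finset.mem_filter, Finset.mem_union, h x]
    tauto
  rw [hu, Finset.card_union_of_disjoint]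
  rw [Finset.disjoint_left]
  intro x h1 h2
  exact hd x ⟨(Finset.mem_filter.mp h1).2, (Finset.mem_filter.mp h2).2⟩

lemma W_triple (hm3 : 3 ≤ m) (hmodd : Odd m) (hgcd : Nat.gcd d (2 ^ m - 1) = 1)
    {α β : GaloisField 2 m} (hα : α ≠ 0) (hβ : β ≠ 0) (hab : α ≠ β) :
    Wf m d α + Wf m d β + Wf m d (α + β)
      = 2 ^ m - 8 * ((Hij m α β 0 0 ∩ Dd m d).card : ℤ) := by
  have habne : α + β ≠ 0 := by
    intro h
    apply hab
    have h2 : β + β = 0 := CharTwo.add_self_eq_zero β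
    calc α = α + (β + β) := by rw [h2, add_zero]
      _ = (α + β) + β := by ring
      _ = β := by rw [h, zero_add]
  have hWa := Wf_eq hm3 hmodd hgcd hα
  have hWb := Wf_eq hm3 hmodd hgcd hβ
  have hWab := Wf_eq hm3 hmodd hgcd habne
  have hc00 := Hij_inter (m := m) (d := d) α β 0 0
  set D := Dd m d with hD
  have htrab : ∀ x : GaloisField 2 m, tr m ((α + β) * x) = tr m (α * x) + tr m (β * x) := by
    intro x
    rw [add_mul, tr_add]
  have hz1 : ∀ a b : ZMod 2, a = 0 ↔ ((a = 0 ∧ b = 0) ∨ (a = 0 ∧ b = 1)) := by decide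
  have hz2 : ∀ a b : ZMod 2, b = 0 ↔ ((a = 0 ∧ b = 0) ∨ (a = 1 ∧ b = 0)) := by decide
  have hz3 : ∀ a b : ZMod 2, a + b = 0 ↔ ((a = 0 ∧ b = 0) ∨ (a = 1 ∧ b = 1)) := by decide
  have hz5 : ∀ a b : ZMod 2, a = 1 ↔ ((a = 1 ∧ b = 0) ∨ (a = 1 ∧ b = 1)) := by decide
  have hd1 : ∀ a b : ZMod 2, ¬(((a = 0 ∧ b = 0)) ∧ ((a = 0 ∧ b = 1))) := by decide
  have hd2 : ∀ a b : ZMod 2, ¬(((a = 0 ∧ b = 0)) ∧ ((a = 1 ∧ b = 0))) := by decide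
  have hd3 : ∀ a b : ZMod 2, ¬(((a = 0 ∧ b = 0)) ∧ ((a = 1 ∧ b = 1))) := by decide
  have hd5 : ∀ a b : ZMod 2, ¬(((a = 1 ∧ b = 0)) ∧ ((a = 1 ∧ b = 1))) := by decide
  have hAa : (D.filter fun x => tr m (α * x) = 0).card
      = (D.filter fun x => tr m (α * x) = 0 ∧ tr m (β * x) = 0).card
        + (D.filter fun x => tr m (α * x) = 0 ∧ tr m (β * x) = 1).card :=
    card_filter_split D (fun x => tr m (α * x) = 0)
      (fun x => tr m (α * x) = 0 ∧ tr m (β * x) = 0)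
      (fun x => tr m (α * x) = 0 ∧ tr m (β * x) = 1)
      (fun x => hz1 (tr m (α * x)) (tr m (β * x)))
      (fun x => hd1 (tr m (α * x)) (tr m (β * x)))
  have hAb : (D.filter fun x => tr m (β * x) = 0).card
      = (D.filter fun x => tr m (α * x) = 0 ∧ tr m (β * x) = 0).card
        + (D.filter fun x => tr m (α * x) = 1 ∧ tr m (β * x) = 0).card :=
    card_filter_split D (fun x => tr m (β * x) = 0)
      (fun x => tr m (α * x) = 0 ∧ tr m (β * x) = 0)
      (fun x => tr m (α * x) = 1 ∧ tr m (β * x) = 0)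
      (fun x => hz2 (tr m (α * x)) (tr m (β * x)))
      (fun x => hd2 (tr m (α * x)) (tr m (β * x)))
  have hAab : (D.filter fun x => tr m ((α + β) * x) = 0).card
      = (D.filter fun x => tr m (α * x) = 0 ∧ tr m (β * x) = 0).card
        + (D.filter fun x => tr m (α * x) = 1 ∧ tr m (β * x) = 1).card :=
    card_filter_split D (fun x => tr m ((α + β) * x) = 0)
      (fun x => tr m (α * x) = 0 ∧ tr m (β * x) = 0)
      (fun x => tr m (α * x) = 1 ∧ tr m (β * x) = 1)
      (fun x => by
        show tr m ((α + β) * x) = 0 ↔ _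
        rw [htrab x]
        exact hz3 (tr m (α * x)) (tr m (β * x)))
      (fun x => hd3 (tr m (α * x)) (tr m (β * x)))
  have hA1 : (D.filter fun x => tr m (α * x) = 1).card
      = (D.filter fun x => tr m (α * x) = 1 ∧ tr m (β * x) = 0).card
        + (D.filter fun x => tr m (α * x) = 1 ∧ tr m (β * x) = 1).card :=
    card_filter_split D (fun x => tr m (α * x) = 1)
      (fun x => tr m (α * x) = 1 ∧ tr m (β * x) = 0)
      (fun x => tr m (α * x) = 1 ∧ tr m (β * x) = 1)
      (fun x => hz5 (tr m (α * x)) (tr m (β * x)))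
      (fun x => hd5 (tr m (α * x)) (tr m (β * x)))
  have htot : D.card = (D.filter fun x => tr m (α * x) = 0).card
      + (D.filter fun x => tr m (α * x) = 1).card :=
    card_split D (fun x => tr m (α * x))
  have h2D := Dd_card (d := d) hm3 hmodd hgcd
  rw [← hD] at h2D
  rw [hc00, hWa, hWb, hWab]
  omega

end aux4

/-- Under the hypotheses of the main theorem (maximum nonlinear power map with
the three codimension-2 intersection sizes), the Walsh coefficient
`∑_x (-1)^(tr(αx + x^d))` is nonzero exactly when `tr(α) = 1`. -/
theorem stmt9 (m : ℕ) (hm3 : 3 ≤ m) (hmodd : Odd m) (d : ℕ)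
    (hgcd : Nat.gcd d (2 ^ m - 1) = 1) (hmax : MaxNonlinear m d)
    (hinter : ∀ α β : GaloisField 2 m, α ≠ 0 → β ≠ 0 → α ≠ β → ∀ i j : ZMod 2,
      ((Hij m α β i j ∩ Dd m d).card : ℤ) ∈
        ({2 ^ (m - 3), 2 ^ (m - 3) - 2 ^ ((m - 3) / 2),
          2 ^ (m - 3) + 2 ^ ((m - 3) / 2)} : Set ℤ)) :
    ∀ α : GaloisField 2 m,
      (∑ x : GaloisField 2 m, chi (tr m (α * x + x ^ d))) ≠ 0 ↔ tr m α = 1 := by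
  have hm0 : m ≠ 0 := by omega
  obtain ⟨k, hk⟩ : ∃ k, m = 2 * k + 3 := by
    obtain ⟨j, hj⟩ := hmodd
    exact ⟨j - 1, by omega⟩
  set s : GaloisField 2 m → ZMod 2 := fun γ => if Wf m d γ = 0 then 0 else 1 with hs
  have hW0 : Wf m d 0 = 0 := Wf_zero hm3 hmodd hgcd
  have hs0 : s 0 = 0 := by simp [hs, hW0]
  have htpos : (0:ℤ) < 2 ^ k := by positivity
  have hWmem : ∀ γ : GaloisField 2 m,
      Wf m d γ = 0 ∨ Wf m d γ = 4 * 2 ^ k ∨ Wf m d γ = -(4 * 2 ^ k) := by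
    intro γ
    have h := hmax 1 one_ne_zero γ
    have hw : walsh m d 1 γ = Wf m d γ := by
      unfold walsh Wf
      simp only [one_mul]
    rw [hw] at h
    have hexp : (m + 1) / 2 = k + 2 := by omega
    rw [hexp] at h
    have he : (2:ℤ) ^ (k + 2) = 4 * 2 ^ k := by rw [pow_add]; ring
    simp only [Set.mem_insert_iff, Set.mem_singleton_iff, he] at h
    exact h
  -- additivity of s
  have hadd : ∀ a b : GaloisField 2 m, s (a + b) = s a + s b := by
    intro a b
    rcases eq_or_ne a 0 with rfl | ha
    · rw [zero_add, hs0, zero_add]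
    rcases eq_or_ne b 0 with rfl | hb
    · rw [add_zero, hs0, add_zero]
    rcases eq_or_ne a b with rfl | hab
    · rw [CharTwo.add_self_eq_zero a, hs0]
      rcases zmod2_cases (s a) with h | h <;> rw [h] <;> decide
    have htrip := W_triple hm3 hmodd hgcd ha hb hab
    have hint := hinter a b ha hb hab 0 0
    have hm31 : m - 3 = 2 * k := by omega
    have hm32 : (m - 3) / 2 = k := by omega
    rw [hm32, hm31] at hint
    simp only [Set.mem_insert_iff, Set.mem_singleton_iff] at hint
    have hμ : (2:ℤ) ^ m = 8 * (2 ^ k * 2 ^ k) := by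
      rw [hk, pow_add, two_mul, pow_add]
      ring
    have h2k : (2:ℤ) ^ (2 * k) = 2 ^ k * 2 ^ k := by
      rw [two_mul, pow_add]
    have hsum : Wf m d a + Wf m d b + Wf m d (a + b) = 0
        ∨ Wf m d a + Wf m d b + Wf m d (a + b) = 8 * 2 ^ k
        ∨ Wf m d a + Wf m d b + Wf m d (a + b) = -(8 * 2 ^ k) := by
      rcases hint with h | h | h
      · left; rw [htrip, h, hμ, h2k]; ring
      · right; left; rw [htrip, h, hμ, h2k]; ring
      · right; right; rw [htrip, h, hμ, h2k]; ring
    obtain hwa := hWmem a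
    obtain hwb := hWmem b
    obtain hwc := hWmem (a + b)
    have hne4 : ¬((4 * (2:ℤ) ^ k) = 0) := by omega
    have hnem4 : ¬((-(4 * (2:ℤ) ^ k)) = 0) := by omega
    rcases hwa with h1 | h1 | h1 <;> rcases hwb with h2 | h2 | h2 <;>
      rcases hwc with h3 | h3 | h3 <;>
      [skip; skip; skip; skip; skip; skip; skip; skip; skip; skip; skip; skip; skip; skip;
       skip; skip; skip; skip; skip; skip; skip; skip; skip; skip; skip; skip; skip] <;>
      first
        | (exfalso; rcases hsum with hS | hS | hS <;> omega)
        | (simp only [hs, h1, h2, h3, if_pos rfl, if_neg hne4, if_neg hnem4]; decide)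
  -- s is the trace against some lam
  have hslin : ∀ (c : ZMod 2) (x : GaloisField 2 m), s (c • x) = c • s x := by
    intro c x
    rcases zmod2_cases c with rfl | rfl
    · rw [zero_smul, hs0, zero_smul]
    · rw [one_smul, one_smul]
  let sl : GaloisField 2 m →ₗ[ZMod 2] ZMod 2 :=
    { toFun := s, map_add' := hadd, map_smul' := hslin }
  have hnd : (Algebra.traceForm (ZMod 2) (GaloisField 2 m)).Nondegenerate :=
    traceForm_nondegenerate _ _
  set lam := (((Algebra.traceForm (ZMod 2) (GaloisField 2 m)).toDual hnd).symm sl :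
      GaloisField 2 m) with hlamdef
  have hlam : ∀ x : GaloisField 2 m, tr m (lam * x) = s x := by
    intro x
    have h := LinearMap.BilinForm.apply_toDual_symm_apply
      (B := Algebra.traceForm (ZMod 2) (GaloisField 2 m)) (hB := hnd) (f := sl) (v := x)
    rw [Algebra.traceForm_apply] at h
    exact h
  -- Frobenius invariance forces lam ∈ {0, 1}
  have hsfrob : ∀ γ : GaloisField 2 m, s (γ ^ 2) = s γ := by
    intro γ
    simp only [hs, Wf_frob]
  have hself : ∀ y : GaloisField 2 m, tr m (lam * lam * y) = tr m (lam * y) := by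
    intro y
    obtain ⟨γ, rfl⟩ : ∃ γ : GaloisField 2 m, γ ^ 2 = y := sq_bij.2 y
    have e1 : lam * lam * γ ^ 2 = (lam * γ) ^ 2 := by ring
    rw [e1, tr_sq, hlam, ← hsfrob, ← hlam]
  have hlamsq : lam * lam + lam = 0 := by
    apply hnd.1
    intro y
    rw [Algebra.traceForm_apply]
    show tr m ((lam * lam + lam) * y) = 0
    rw [add_mul, tr_add, hself y]
    exact CharTwo.add_self_eq_zero _
  have hlam01 : lam = 0 ∨ lam = 1 := by
    have hfac : lam * (lam + 1) = 0 := by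
      calc lam * (lam + 1) = lam * lam + lam := by ring
        _ = 0 := hlamsq
    rcases mul_eq_zero.mp hfac with h | h
    · left; exact h
    · right
      calc lam = lam + 1 + 1 := by
            rw [add_assoc]
            rw [CharTwo.add_self_eq_zero (1 : GaloisField 2 m), add_zero]
        _ = 0 + 1 := by rw [h]
        _ = 1 := by rw [zero_add]
  have hlam1 : lam = 1 := by
    rcases hlam01 with h | h
    · exfalso
      have hzero : ∀ γ : GaloisField 2 m, Wf m d γ = 0 := by
        intro γ
        have := hlam γ
        rw [h, zero_mul] at this
        have htr0 : tr m (0 : GaloisField 2 m) = 0 :=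
          map_zero (Algebra.trace (ZMod 2) (GaloisField 2 m))
        rw [htr0] at this
        by_contra hne
        rw [hs] at this
        simp only [if_neg hne] at this
        exact one_ne_zero this.symm
      have hWsum := Wf_sum (d := d) hm3 hmodd hgcd
      rw [Finset.sum_congr rfl (fun γ _ => hzero γ), Finset.sum_const, smul_zero] at hWsum
      have : (0:ℤ) < 2 ^ m := by positivity
      omega
    · exact h
  -- conclusion
  intro α
  have hfin : tr m α = s α := by
    rw [← hlam α, hlam1, one_mul]
  show Wf m d α ≠ 0 ↔ tr m α = 1
  rw [hfin]
  by_cases h : Wf m d α = 0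
  · simp only [hs, if_pos h, h]
    simp
  · simp only [hs, if_neg h]
    simp [h]
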